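/- Assume n ≠ 2p, and for each integer w ≥ 0 define λ_{w,1} = −w(w+n+1)−p and λ_{w,2} = −w(w+n+1)−(n−p). Then for all integers w, w' ≥ 0 and all i, j ∈ {1,2}, λ_{w,i} = λ_{w',j} implies w = w' and i = j. -/

import Mathlib

/-- for `n ≠ 2p`, the eigenvalues `λ_{w,1} = -w(w+n+1)-p` and
`λ_{w,2} = -w(w+n+1)-(n-p)` are pairwise distinct: `λ_{w,i} = λ_{w',j}` implies
`w = w'` and `i = j` (indices `i ∈ {1,2}` are encoded as `Fin 2`, with `0 ↦ p`
and `1 ↦ n-p`). -/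
theorem statement19 (p n : ℝ) (hp : 0 < p) (hpn : p < n) (hn : n ≠ 2 * p)
    (w w' : ℕ) (i j : Fin 2)
    (h : -((w : ℝ) * ((w : ℝ) + n + 1)) - (if i = 0 then p else n - p)
        = -((w' : ℝ) * ((w' : ℝ) + n + 1)) - (if j = 0 then p else n - p)) :
    w = w' ∧ i = j := by
  have hci1 : (0:ℝ) < (if i = 0 then p else n - p) := by split <;> linarith
  have hci2 : (if i = 0 then p else n - p) < n := by split <;> linarith
  have hcj1 : (0:ℝ) < (if j = 0 then p else n - p) := by split <;> linarith
  have hcj2 : (if j = 0 then p else n - p) < n := by split <;> linarith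
  have hw0 : (0:ℝ) ≤ (w : ℝ) := Nat.cast_nonneg w
  have hw'0 : (0:ℝ) ≤ (w' : ℝ) := Nat.cast_nonneg w'
  have hw : w = w' := by
    rcases lt_trichotomy w w' with hlt | heq | hgt
    · exfalso
      have h1 : (w:ℝ) + 1 ≤ (w' : ℝ) := by exact_mod_cast hlt
      nlinarith
    · exact heq
    · exfalso
      have h1 : (w':ℝ) + 1 ≤ (w : ℝ) := by exact_mod_cast hgt
      nlinarith
  subst hw
  refine ⟨rfl, ?_⟩
  have hc : (if i = 0 then p else n - p) = (if j = 0 then p else n - p) := by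
    linarith
  by_cases hi : i = 0 <;> by_cases hj : j = 0
  · rw [hi, hj]
  · simp [hi, hj] at hc; exact absurd (by linarith) hn
  · simp [hi, hj] at hc; exact absurd (by linarith) hn
  · rw [Fin.eq_one_of_ne_zero i hi, Fin.eq_one_of_ne_zero j hj]
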